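/- Let α,β,γ,δ,k ∈ ℝ with αδ−βγ ≠ 0, let n ≥ 1 be a natural number, and define ψ(t) = (αt+β)/(γt+δ) for real t with γt+δ ≠ 0. Suppose that for every t ∈ ℝ such that γt+δ ≠ 0 and γ·ψ(t)+δ ≠ 0 one has ψ(ψ(t)) = t, and that for every t ∈ ℝ with γt+δ ≠ 0 one has (k·(γ·ψ(t)+δ)ⁿ)·(k·(γt+δ)ⁿ) = 1. Then either (I) α = −δ and k²·(γβ+δ²)ⁿ = 1, or (II) β = γ = 0, α = δ ≠ 0, and k²·δ²ⁿ = 1. -/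

import Mathlib

/-- Theorem 8 (fund3): if `φ(t,s) = (ψ(t), k(γt+δ)^n·s + c(t))` is an involution, then
either (I) `α = −δ` and `k²(γβ+δ²)^n = 1`, or (II) `β = γ = 0`, `α = δ ≠ 0`
and `k²δ^(2n) = 1`. -/
theorem stmt_7 (α β γ δ k : ℝ) (hm : α * δ - β * γ ≠ 0)
    (n : ℕ) (hn : 1 ≤ n)
    (ψ : ℝ → ℝ) (hψ : ∀ t : ℝ, γ * t + δ ≠ 0 → ψ t = (α * t + β) / (γ * t + δ))
    (hinv : ∀ t : ℝ, γ * t + δ ≠ 0 → γ * ψ t + δ ≠ 0 → ψ (ψ t) = t)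
    (h : ∀ t : ℝ, γ * t + δ ≠ 0 →
      (k * (γ * ψ t + δ) ^ n) * (k * (γ * t + δ) ^ n) = 1) :
    (α = -δ ∧ k ^ 2 * (γ * β + δ ^ 2) ^ n = 1) ∨
      (β = 0 ∧ γ = 0 ∧ α = δ ∧ δ ≠ 0 ∧ k ^ 2 * δ ^ (2 * n) = 1) := by
  have key : ∀ t : ℝ, γ * t + δ ≠ 0 →
      k ^ 2 * (γ * (α + δ) * t + (γ * β + δ ^ 2)) ^ n = 1 := by
    intro t ht
    have h1 := h t ht
    have h2 : (γ * ψ t + δ) * (γ * t + δ) = γ * (α + δ) * t + (γ * β + δ ^ 2) := by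
      rw [hψ t ht]; field_simp; ring
    calc k ^ 2 * (γ * (α + δ) * t + (γ * β + δ ^ 2)) ^ n
        = (k * (γ * ψ t + δ) ^ n) * (k * (γ * t + δ) ^ n) := by
          rw [← h2, mul_pow]; ring
      _ = 1 := h1
  have ha : γ * (α + δ) = 0 := by
    by_contra ha
    have hγ : γ ≠ 0 := fun hg => ha (by rw [hg]; ring)
    set a := γ * (α + δ) with hadef
    set b := γ * β + δ ^ 2 with hbdef
    set x0 : ℝ := a * (-δ / γ) + b with hx0
    have keyx : ∀ x : ℝ, x ≠ x0 → k ^ 2 * x ^ n = 1 := by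
      intro x hx
      have ht : γ * ((x - b) / a) + δ ≠ 0 := by
        intro h0
        apply hx
        have htt : (x - b) / a = -δ / γ := by
          field_simp at h0 ⊢
          linarith
        have : x = a * ((x - b) / a) + b := by field_simp; ring
        rw [this, htt]
      have hk := key ((x - b) / a) ht
      rwa [show a * ((x - b) / a) + b = x by field_simp; ring] at hk
    have hxlt1 : x0 < |x0| + 1 := by linarith [le_abs_self x0]
    have e1 := keyx (|x0| + 1) (by intro hh; linarith)
    have e2 := keyx (|x0| + 2) (by have := le_abs_self x0; intro hh; linarith)
    have hk : k ≠ 0 := by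
      intro hk0; rw [hk0] at e1; norm_num at e1
    have hk2 : k ^ 2 ≠ 0 := pow_ne_zero 2 hk
    have hxx : (|x0| + 1) ^ n = (|x0| + 2) ^ n :=
      mul_left_cancel₀ hk2 (e1.trans e2.symm)
    have hlt : (|x0| + 1) ^ n < (|x0| + 2) ^ n := by
      apply pow_lt_pow_left₀ (by linarith [abs_nonneg x0]) (by linarith [abs_nonneg x0])
      omega
    linarith
  rcases mul_eq_zero.mp ha with hγ | hαδ
  · -- γ = 0
    have hδ : δ ≠ 0 := by
      intro h0; apply hm; rw [hγ, h0]; ring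
    have hb := key 0 (by rw [hγ]; simpa using hδ)
    rw [hγ] at hb
    norm_num at hb
    have H : ∀ t : ℝ, α * (α * t + β) + β * δ = δ ^ 2 * t := by
      intro t
      have h0 : γ * t + δ ≠ 0 := by rw [hγ]; simpa using hδ
      have h1 : γ * ψ t + δ ≠ 0 := by rw [hγ]; simpa using hδ
      have h2 := hinv t h0 h1
      rw [hψ _ h0] at h2
      rw [hψ _ (by rw [hγ]; simpa using hδ)] at h2
      rw [hγ] at h2
      simp only [mul_zero, zero_mul, zero_add, zero_div] at h2
      field_simp at h2
      nlinarith [h2]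
    have H0 := H 0
    have H1 := H 1
    have hsq : (α - δ) * (α + δ) = 0 := by nlinarith
    rcases mul_eq_zero.mp hsq with hc | hc
    · -- α = δ
      have hαδ2 : α = δ := by linarith
      have hβ : β = 0 := by
        have : β * (α + δ) = 0 := by nlinarith
        rcases mul_eq_zero.mp this with h' | h'
        · exact h'
        · exfalso; apply hδ; linarith
      right
      refine ⟨hβ, hγ, hαδ2, hδ, ?_⟩
      rw [pow_mul]
      nlinarith [hb]
    · -- α = -δ
      left
      refine ⟨by linarith, ?_⟩
      rw [hγ]
      norm_num
      nlinarith [hb]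
  · -- α + δ = 0
    left
    refine ⟨by linarith, ?_⟩
    obtain ⟨t, ht⟩ : ∃ t : ℝ, γ * t + δ ≠ 0 := by
      by_cases hγ : γ = 0
      · exact ⟨0, by rw [hγ]; simp; intro h0; apply hm; rw [hγ, h0]; ring⟩
      · exact ⟨(1 - δ) / γ, by field_simp; simp⟩
    have hb := key t ht
    rw [show γ * (α + δ) = 0 by rw [show α + δ = 0 by linarith]; ring] at hb
    simpa using hb
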